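/- Let T ∈ ℕ and ε > 0. Let d : ℝ^p → ℝ be a differentiable 1-strongly convex function with Bregman distance ξ(x,y) := d(y) − d(x) − ⟨∇d(x), y − x⟩, let h : ℝ^p → ℝ be convex, and for each t = 0,…,T let g_t : ℝ^p → ℝ be convex and differentiable. Let points x_0, x_1, …, x_{T+1} ∈ ℝ^p and constants L_1, …, L_{T+1} > 0 satisfy, for each t = 0,…,T: (i) for all y ∈ ℝ^p, ⟨∇g_t(x_t) + 2L_{t+1}(∇d(x_{t+1}) − ∇d(x_t)), y − x_{t+1}⟩ + h(y) − h(x_{t+1}) ≥ 0; (ii) g_t(x_{t+1}) ≤ g_t(x_t) + ⟨∇g_t(x_t), x_{t+1} − x_t⟩ + L_{t+1}‖x_{t+1} − x_t‖² + ε/2. Then for every y ∈ ℝ^p, ∑_{t=0}^{T} (1/L_{t+1})·[(g_t(x_{t+1}) + h(x_{t+1})) − (g_t(y) + h(y))] ≤ (ε/2)·∑_{t=0}^{T} (1/L_{t+1}) + 2·ξ(x_0, y). -/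

import Mathlib

open scoped InnerProductSpace


private lemma subgrad {n : ℕ} {f : EuclideanSpace ℝ (Fin n) → ℝ}
    (hc : ConvexOn ℝ Set.univ f) (hdf : Differentiable ℝ f)
    (a b : EuclideanSpace ℝ (Fin n)) :
    f a + ⟪gradient f a, b - a⟫_ℝ ≤ f b := by
  set c : ℝ → EuclideanSpace ℝ (Fin n) := fun r => a + r • (b - a) with hcdef
  have hcd : HasDerivAt c (b - a) 0 := by
    exact (((hasDerivAt_id (0 : ℝ)).smul_const (b - a)).const_add a).congr_deriv (one_smul ℝ (b - a))
  have hfg := (hdf a).hasGradientAt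
  rw [hasGradientAt_iff_hasFDerivAt] at hfg
  have hc0 : c 0 = a := by simp [hcdef]
  have hfg' : HasFDerivAt f
      ((InnerProductSpace.toDual ℝ (EuclideanSpace ℝ (Fin n))) (gradient f a)) (c 0) := by
    rw [hc0]; exact hfg
  have hφ : HasDerivAt (f ∘ c) ⟪gradient f a, b - a⟫_ℝ 0 := by
    have := hfg'.comp_hasDerivAt 0 hcd
    simpa using this
  have hconv : ConvexOn ℝ Set.univ (f ∘ c) := by
    have := hc.comp_affineMap (AffineMap.lineMap a b)
    have he : f ∘ c = f ∘ (AffineMap.lineMap a b) := by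
      funext r
      show f (a + r • (b - a)) = f (AffineMap.lineMap a b r)
      congr 1
      simp only [AffineMap.lineMap_apply_module]
      module
    rw [he]
    simpa using this
  have hs := hconv.le_slope_of_hasDerivAt (Set.mem_univ (0:ℝ)) (Set.mem_univ (1:ℝ))
    one_pos hφ
  have hc1 : c 1 = b := by simp [hcdef]
  rw [slope_def_field] at hs
  simp only [Function.comp, hc0, hc1] at hs
  have : ⟪gradient f a, b - a⟫_ℝ ≤ f b - f a := by
    simpa [hcdef] using hs
  linarith

/-- Regret bound of the generic O-UPGM. With `d` a differentiable 1-strongly convex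
prox-function, `h` convex, each `g t` convex and differentiable, points `x 0, …, x (T+1)`
and constants `L 1, …, L (T+1) > 0` satisfying the optimality condition (i) and the
line-search condition (ii) at each step, for every `y`,
`∑_{t=0}^{T} (1/L_{t+1})·[(g_t(x_{t+1}) + h(x_{t+1})) − (g_t(y) + h(y))]
  ≤ (ε/2)·∑_{t=0}^{T} (1/L_{t+1}) + 2·ξ(x_0, y)`. -/
theorem statement7 {p : ℕ} (T : ℕ) (ε : ℝ) (hε : 0 < ε)
    (d : EuclideanSpace ℝ (Fin p) → ℝ) (hd : Differentiable ℝ d)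
    (hdsc : ∀ x y : EuclideanSpace ℝ (Fin p),
      d x + ⟪gradient d x, y - x⟫_ℝ + 1 / 2 * ‖y - x‖ ^ 2 ≤ d y)
    (h : EuclideanSpace ℝ (Fin p) → ℝ) (hh : ConvexOn ℝ Set.univ h)
    (g : ℕ → EuclideanSpace ℝ (Fin p) → ℝ)
    (hgconv : ∀ t ≤ T, ConvexOn ℝ Set.univ (g t))
    (hgdiff : ∀ t ≤ T, Differentiable ℝ (g t))
    (x : ℕ → EuclideanSpace ℝ (Fin p)) (L : ℕ → ℝ)
    (hL : ∀ t ≤ T, 0 < L (t + 1))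
    (hopt : ∀ t ≤ T, ∀ y : EuclideanSpace ℝ (Fin p),
      ⟪gradient (g t) (x t)
          + (2 * L (t + 1)) • (gradient d (x (t + 1)) - gradient d (x t)),
        y - x (t + 1)⟫_ℝ + h y - h (x (t + 1)) ≥ 0)
    (hls : ∀ t ≤ T,
      g t (x (t + 1)) ≤ g t (x t) + ⟪gradient (g t) (x t), x (t + 1) - x t⟫_ℝ
        + L (t + 1) * ‖x (t + 1) - x t‖ ^ 2 + ε / 2) :
    ∀ y : EuclideanSpace ℝ (Fin p),
      ∑ t ∈ Finset.range (T + 1),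
          1 / L (t + 1) * ((g t (x (t + 1)) + h (x (t + 1))) - (g t y + h y))
        ≤ ε / 2 * ∑ t ∈ Finset.range (T + 1), 1 / L (t + 1)
          + 2 * (d y - d (x 0) - ⟪gradient d (x 0), y - x 0⟫_ℝ) := by
  intro y
  set ξ : EuclideanSpace ℝ (Fin p) → ℝ :=
    fun a => d y - d a - ⟪gradient d a, y - a⟫_ℝ with hξ
  have key : ∀ t ∈ Finset.range (T + 1),
      1 / L (t + 1) * ((g t (x (t + 1)) + h (x (t + 1))) - (g t y + h y))
        ≤ ε / 2 * (1 / L (t + 1)) + 2 * (ξ (x t) - ξ (x (t + 1))) := by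
    intro t ht
    rw [Finset.mem_range, Nat.lt_succ_iff] at ht
    have hLt := hL t ht
    -- convexity of g t
    have hcg := subgrad (hgconv t ht) (hgdiff t ht) (x t) y
    -- line search
    have hlst := hls t ht
    -- optimality
    have hog := hopt t ht y
    rw [inner_add_left, real_inner_smul_left, inner_sub_left] at hog
    -- three point identity
    have h3 : ⟪gradient d (x (t + 1)), y - x (t + 1)⟫_ℝ
        - ⟪gradient d (x t), y - x (t + 1)⟫_ℝ
        = (ξ (x t) - ξ (x (t + 1)))
          - (d (x (t + 1)) - d (x t) - ⟪gradient d (x t), x (t + 1) - x t⟫_ℝ) := by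
      simp only [hξ, inner_sub_right]
      ring
    -- strong convexity at the pair (x t, x (t+1)) and at (x (T+1), y)
    have hsc : 1 / 2 * ‖x (t + 1) - x t‖ ^ 2
        ≤ d (x (t + 1)) - d (x t) - ⟪gradient d (x t), x (t + 1) - x t⟫_ℝ := by
      have := hdsc (x t) (x (t + 1)); linarith
    -- inner product splitting for hcg vs hlst
    have hsplit : ⟪gradient (g t) (x t), x (t + 1) - x t⟫_ℝ
        - ⟪gradient (g t) (x t), y - x t⟫_ℝ
        = - ⟪gradient (g t) (x t), y - x (t + 1)⟫_ℝ := by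
      simp only [inner_sub_right]; ring
    -- combine into the unscaled bound
    have hmain : (g t (x (t + 1)) + h (x (t + 1))) - (g t y + h y)
        ≤ ε / 2 + 2 * L (t + 1) * (ξ (x t) - ξ (x (t + 1))) := by
      simp only [hξ] at h3 ⊢
      have h3L := congrArg (fun z => 2 * L (t + 1) * z) h3
      have hLsc := mul_le_mul_of_nonneg_left hsc
        (by positivity : (0:ℝ) ≤ 2 * L (t + 1))
      linarith [h3L, hLsc]
    have h1L : 0 ≤ 1 / L (t + 1) := by positivity
    have := mul_le_mul_of_nonneg_left hmain h1L
    calc 1 / L (t + 1) * ((g t (x (t + 1)) + h (x (t + 1))) - (g t y + h y))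
        ≤ 1 / L (t + 1) * (ε / 2 + 2 * L (t + 1) * (ξ (x t) - ξ (x (t + 1)))) := this
      _ = ε / 2 * (1 / L (t + 1)) + 2 * (ξ (x t) - ξ (x (t + 1))) := by
          field_simp
  calc ∑ t ∈ Finset.range (T + 1),
        1 / L (t + 1) * ((g t (x (t + 1)) + h (x (t + 1))) - (g t y + h y))
      ≤ ∑ t ∈ Finset.range (T + 1),
          (ε / 2 * (1 / L (t + 1)) + 2 * (ξ (x t) - ξ (x (t + 1)))) :=
        Finset.sum_le_sum key
    _ = ε / 2 * ∑ t ∈ Finset.range (T + 1), 1 / L (t + 1)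
        + 2 * (ξ (x 0) - ξ (x (T + 1))) := by
        rw [Finset.sum_add_distrib, Finset.mul_sum]
        congr 1
        rw [← Finset.mul_sum, Finset.sum_range_sub' (fun t => ξ (x t))]
    _ ≤ ε / 2 * ∑ t ∈ Finset.range (T + 1), 1 / L (t + 1)
        + 2 * (d y - d (x 0) - ⟪gradient d (x 0), y - x 0⟫_ℝ) := by
        have h0 : 0 ≤ d y - d (x (T + 1))
            - ⟪gradient d (x (T + 1)), y - x (T + 1)⟫_ℝ := by
          have := hdsc (x (T + 1)) y
          have hn : 0 ≤ 1 / 2 * ‖y - x (T + 1)‖ ^ 2 := by positivity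
          linarith
        simp only [hξ]
        linarith
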